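/- For a cochain complex V, the simplicial vector space Z^0Ω_•(V) of degree-0 cocycles of Ω_• ⊗ V is discrete (constant) if and only if V is concentrated in non-negative cohomological degrees, i.e., V = V^{≥0}. -/

import Mathlib

open scoped BigOperators

variable (K : Type) [Field K]

/-- The space `Ω_n^m` of polynomial differential `m`-forms on the `n`-simplex,
in the reduced coordinates `t_1, …, t_n` (with `t_0 = 1 - t_1 - ⋯ - t_n`):
a form `∑_S p_S · dt_S` is the function sending an `m`-element subset
`S = {i_1 < ⋯ < i_m} ⊆ {1,…,n}` to the polynomial coefficient of
`dt_{i_1} ∧ ⋯ ∧ dt_{i_m}`.  This is (a model of) the quotient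
`K[t_0,…,t_n,dt_0,…,dt_n]/(t_0+⋯+t_n-1, dt_0+⋯+dt_n)`. -/
def Form (n m : ℕ) : Type :=
  {s : Finset (Fin n) // s.card = m} → MvPolynomial (Fin n) K

noncomputable instance (n m : ℕ) : AddCommGroup (Form K n m) := by unfold Form; infer_instance
noncomputable instance (n m : ℕ) : Module K (Form K n m) := by unfold Form; infer_instance

/-- The de Rham differential `d : Ω_n^m → Ω_n^{m+1}`,
`d (p · dt_S) = ∑_i (∂p/∂t_i) dt_i ∧ dt_S`. -/
noncomputable def dForm {n m : ℕ} (f : Form K n m) : Form K n (m + 1) := fun s =>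
  ∑ i ∈ s.1.attach,
    ((-1 : K) ^ ((s.1.filter (fun j => j < i.1)).card)) •
      MvPolynomial.pderiv i.1
        (f ⟨s.1.erase i.1, by
          rw [Finset.card_erase_of_mem i.2, s.2]; rfl⟩)

/-- The constant form `c ∈ Ω_n^0`. -/
noncomputable def constForm (n : ℕ) (c : K) : Form K n 0 := fun _ => MvPolynomial.C c
/-- Substitution of forms: given a polynomial substitution `φ` on the variables
`t_v` and a constant-coefficient linear substitution `ψ` on the generators
`dt_v` (`dt_v ↦ ∑_j ψ v j · dt_j`), the induced map `Ω_a^r → Ω_b^r`; the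
coefficient of `dt_{s'}` in the image of `p · dt_s` is the determinant of the
matrix of `ψ`-coefficients. -/
noncomputable def substForm {a b r : ℕ}
    (φ : Fin a → MvPolynomial (Fin b) K) (ψ : Fin a → Fin b → K)
    (f : Form K a r) : Form K b r := fun s' =>
  ∑ s ∈ ((Finset.univ : Finset (Finset (Fin a))).filter fun s => s.card = r).attach,
    (Matrix.det (Matrix.of fun p q : Fin r =>
        ψ ((s.1.orderIsoOfFin ((Finset.mem_filter.mp s.2).2)) p)
          ((s'.1.orderIsoOfFin s'.2) q))) •
      MvPolynomial.aeval φ (f ⟨s.1, (Finset.mem_filter.mp s.2).2⟩)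

/-- The polynomial part of the `i`-th face map `∂_i : Ω_{n+1} → Ω_n`
(setting the barycentric coordinate `t_i = 0`), in the reduced coordinates:
the variable `v` of `Ω_{n+1}` is the barycentric coordinate `t_{v+1}`. -/
noncomputable def facePhi (n : ℕ) (i : Fin (n + 2)) (v : Fin (n + 1)) :
    MvPolynomial (Fin n) K :=
  if h1 : v.1 + 1 < i.1 then MvPolynomial.X ⟨v.1, by have := i.2; omega⟩
  else if h2 : v.1 + 1 = i.1 then 0
  else if h3 : i.1 = 0 ∧ v.1 = 0 then 1 - ∑ j : Fin n, MvPolynomial.X j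
  else MvPolynomial.X ⟨v.1 - 1, by have := v.2; omega⟩

/-- The `dt`-part of the `i`-th face map `∂_i : Ω_{n+1} → Ω_n`. -/
def facePsi (n : ℕ) (i : Fin (n + 2)) (v : Fin (n + 1)) : Fin n → K :=
  if v.1 + 1 < i.1 then fun j => if j.1 = v.1 then 1 else 0
  else if v.1 + 1 = i.1 then 0
  else if i.1 = 0 ∧ v.1 = 0 then fun _ => -1
  else fun j => if j.1 = v.1 - 1 then 1 else 0

/-- The `i`-th simplicial face map `∂_i : Ω_{n+1}^r → Ω_n^r`. -/
noncomputable def faceForm {n r : ℕ} (i : Fin (n + 2)) (f : Form K (n + 1) r) :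
    Form K n r :=
  substForm K (facePhi K n i) (facePsi K n i) f

/-! ### Polynomial differential forms with coefficients

We model (the degreewise completion of) `Ω_n ⊗ V` for a graded module `V` by
"series of forms": a family indexed by a subset `s ⊆ {1,…,n}` (the form part
`dt_s`, in the reduced barycentric coordinates `t_1,…,t_n`) and a monomial
exponent `α` (the coefficient of `t^α`) with values in `V`. -/

/-- Elements of (the completion of) `Ω_n ⊗ V`: the value at `(s, α)` is the
coefficient of `t^α · dt_s`. -/
def FormSeries (V : Type*) (n : ℕ) : Type _ :=
  Finset (Fin n) → (Fin n →₀ ℕ) → V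

instance (V : Type*) [AddCommGroup V] (n : ℕ) : AddCommGroup (FormSeries V n) := by
  unfold FormSeries; infer_instance

noncomputable instance (V : Type*) [AddCommGroup V] [Module K V] (n : ℕ) :
    Module K (FormSeries V n) := by
  unfold FormSeries; infer_instance

variable {V : Type*} [AddCommGroup V] [Module K V]

/-- Homogeneity: `ξ` has total degree `p` iff the coefficient of `t^α dt_s`
lies in `deg (p - |s|)`. -/
def SeriesDeg (deg : ℤ → Submodule K V) (p : ℤ) {n : ℕ} (ξ : FormSeries V n) : Prop :=
  ∀ (s : Finset (Fin n)) (β : Fin n →₀ ℕ), ξ s β ∈ deg (p - s.card)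

/-- Membership in the completed tensor product `Ω_n ⊗̂ V` for a filtration `F`
on `V`: for each fixed form part and each filtration level, only finitely many
coefficients lie outside the filtration level. -/
def SeriesReg (F : ℕ → Submodule K V) {n : ℕ} (ξ : FormSeries V n) : Prop :=
  ∀ (s : Finset (Fin n)) (m : ℕ), {β | ξ s β ∉ F m}.Finite

/-- Membership in the plain tensor product `Ω_n ⊗ V` (finitely many nonzero
coefficients; appropriate for trivially filtered `V`). -/
def SeriesPoly {n : ℕ} (ξ : FormSeries V n) : Prop :=
  ∀ s : Finset (Fin n), {β | ξ s β ≠ 0}.Finite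

/-- The differential of `Ω_n ⊗ V`: `d_Ω ⊗ 1 + (-1)^{form degree} ⊗ d_V`. -/
noncomputable def seriesD (dV : V →ₗ[K] V) {n : ℕ} (ξ : FormSeries V n) :
    FormSeries V n := fun s β =>
  (∑ i ∈ s.attach,
    ((-1 : K) ^ ((s.filter fun j => j < i.1).card)) •
      ((β i.1 + 1) • ξ (s.erase i.1) (β + Finsupp.single i.1 1))) +
  ((-1 : K) ^ s.card) • dV (ξ s β)

/-- The image of `x ∈ V` under the unit `V → Ω_n ⊗ V` (equivalently, the
`n`-fold degeneracy of `x`). -/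
def unitSeries (n : ℕ) (x : V) : FormSeries V n := fun s β =>
  if s = ∅ ∧ β = 0 then x else 0

/-- The `m`-simplex `ω^m ⊗ x`, where `ω^m = m! dt_1 ⋯ dt_m` is the normalized
volume form. -/
noncomputable def omegaSeries (m : ℕ) (x : V) : FormSeries V m := fun s β =>
  if s = Finset.univ ∧ β = 0 then (m.factorial : K) • x else 0

/-- The structure coefficient of the `i`-th face map on `Ω_{n+1} ⊗ V`: the
coefficient with which `t^α dt_s` contributes to `t^β dt_{s'}`. -/
noncomputable def faceCoeff (n : ℕ) (i : Fin (n + 2)) (s : Finset (Fin (n + 1)))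
    (α : Fin (n + 1) →₀ ℕ) (s' : Finset (Fin n)) (β : Fin n →₀ ℕ) : K :=
  if h : s.card = s'.card then
    Matrix.det (Matrix.of fun p q : Fin s'.card =>
      facePsi K n i (s.orderIsoOfFin h p) (s'.orderIsoOfFin rfl q)) *
      MvPolynomial.coeff β (α.prod fun v e => facePhi K n i v ^ e)
  else 0

/-- The `i`-th face map on the plain tensor product `Ω_{n+1} ⊗ V` (the finite
sum is expressed with `finsum`). -/
noncomputable def faceSeries {n : ℕ} (i : Fin (n + 2)) (ξ : FormSeries V (n + 1)) :
    FormSeries V n := fun s' β =>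
  ∑ᶠ p : Finset (Fin (n + 1)) × (Fin (n + 1) →₀ ℕ),
    faceCoeff K n i p.1 p.2 s' β • ξ p.1 p.2

/-- Convergence of (possibly infinite) sums with respect to a filtration `F`:
`l` is the limit of the partial sums of `f`. -/
def HasSumF (F : ℕ → Submodule K V) {ι : Type*} (f : ι → V) (l : V) : Prop :=
  ∀ m : ℕ, ∃ s₀ : Finset ι, ∀ s : Finset ι, s₀ ⊆ s → l - ∑ i ∈ s, f i ∈ F m

/-- The `i`-th face map on the completed tensor product `Ω_{n+1} ⊗̂ V`, as a
relation (`faceSeriesC F i ξ χ` ⟺ `∂_i ξ = χ`); the infinite sums converge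
with respect to the filtration, and the value is unique by separatedness. -/
def faceSeriesC (F : ℕ → Submodule K V) {n : ℕ} (i : Fin (n + 2))
    (ξ : FormSeries V (n + 1)) (χ : FormSeries V n) : Prop :=
  ∀ (s' : Finset (Fin n)) (β : Fin n →₀ ℕ),
    HasSumF K F
      (fun p : Finset (Fin (n + 1)) × (Fin (n + 1) →₀ ℕ) =>
        faceCoeff K n i p.1 p.2 s' β • ξ p.1 p.2)
      (χ s' β)

/-!
STATEMENT 13: for a cochain complex `V`, the simplicial vector space
`Z⁰Ω_•(V)` of degree-`0` cocycles of `Ω_• ⊗ V` is discrete (constant) iff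
`V = V^{≥0}` is concentrated in non-negative cohomological degrees.
Discreteness amounts to every degree-`0` cocycle of `Ω_n ⊗ V` being the
`n`-fold degeneracy `unitSeries n x` of a degree-`0` cocycle `x` of `V`
(the unit map being injective, this says exactly that all the degeneracies
`Z⁰V → Z⁰(Ω_n ⊗ V)` are bijections). -/
theorem cocycle_space_discrete_iff_nonneg [CharZero K]
    (V : Type*) [AddCommGroup V] [Module K V]
    (deg : ℤ → Submodule K V) (dV : V →ₗ[K] V)
    (hgr : DirectSum.IsInternal deg)
    (hdeg : ∀ (i : ℤ) (x : V), x ∈ deg i → dV x ∈ deg (i + 1))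
    (hdd : ∀ x : V, dV (dV x) = 0) :
    (∀ (n : ℕ) (ξ : FormSeries V n), SeriesPoly ξ → SeriesDeg K deg 0 ξ →
        seriesD K dV ξ = 0 →
        ∃ x : V, x ∈ deg 0 ∧ dV x = 0 ∧ ξ = unitSeries n x) ↔
      (∀ i : ℤ, i < 0 → deg i = ⊥) := by
  constructor
  · -- discreteness implies concentration in non-negative degrees
    intro hdisc i hi
    rw [eq_bot_iff]
    intro x hx
    simp only [Submodule.mem_bot]
    by_contra hxne
    obtain ⟨m, hmi, hm1⟩ : ∃ m : ℕ, (m : ℤ) = -i ∧ 0 < m :=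
      ⟨(-i).toNat, Int.toNat_of_nonneg (by omega), by omega⟩
    let i0 : Fin m := ⟨0, hm1⟩
    set s₀ : Finset (Fin m) := Finset.univ.erase i0 with hs₀
    set β₀ : Fin m →₀ ℕ := Finsupp.single i0 1 with hβ₀
    set ξ : FormSeries V m := fun s β =>
      if s = Finset.univ ∧ β = 0 then x
      else if s = s₀ ∧ β = β₀ then ((-1 : K) ^ (m - 1)) • dV x else 0 with hξ
    have hcardu : (Finset.univ : Finset (Fin m)).card = m := by
      simp [Finset.card_univ]
    have hcards₀ : s₀.card = m - 1 := by
      rw [hs₀, Finset.card_erase_of_mem (Finset.mem_univ i0), hcardu]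
    -- the key evaluation of ξ at erased sets / shifted exponents
    have hval : ∀ (s : Finset (Fin m)) (j : Fin m) (β : Fin m →₀ ℕ), j ∈ s →
        ξ (s.erase j) (β + Finsupp.single j 1) =
          (if s = Finset.univ ∧ β = 0 ∧ j = i0 then ((-1 : K) ^ (m - 1)) • dV x else 0) := by
      intro s j β hj
      rw [hξ]
      simp only
      rw [if_neg (by
        rintro ⟨h1, -⟩
        exact (Finset.notMem_erase j s) (h1 ▸ Finset.mem_univ j))]
      by_cases hc : s = Finset.univ ∧ β = 0 ∧ j = i0
      · obtain ⟨rfl, rfl, rfl⟩ := hc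
        rw [if_pos (by exact ⟨hs₀.symm, by simp [hβ₀]⟩), if_pos (by exact ⟨rfl, rfl, rfl⟩)]
      · rw [if_neg, if_neg hc]
        rintro ⟨h1, h2⟩
        apply hc
        have hji : j = i0 := by
          by_contra hji
          have := DFunLike.congr_fun h2 j
          simp [hβ₀, Finsupp.single_apply, Ne.symm hji] at this
        have hβ : β = 0 := by
          ext k
          have h3 := DFunLike.congr_fun h2 k
          rw [hji] at h3
          simp only [hβ₀, Finsupp.add_apply, Finsupp.single_apply, Finsupp.coe_zero,
            Pi.zero_apply] at h3 ⊢
          split_ifs at h3 <;> omega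
        refine ⟨?_, hβ, hji⟩
        have h4 := Finset.insert_erase hj
        rw [h1, hji, hs₀, Finset.insert_erase (Finset.mem_univ i0)] at h4
        exact h4.symm
    -- ξ is a cocycle
    have hcocycle : seriesD K dV ξ = 0 := by
      funext s β
      show (∑ j ∈ s.attach,
          ((-1 : K) ^ ((s.filter (fun k => k < j.1)).card)) •
            ((β j.1 + 1) • ξ (s.erase j.1) (β + Finsupp.single j.1 1))) +
          ((-1 : K) ^ s.card) • dV (ξ s β) = 0
      rw [Finset.sum_attach s (fun j => ((-1 : K) ^ ((s.filter (fun k => k < j)).card)) •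
            ((β j + 1) • ξ (s.erase j) (β + Finsupp.single j 1)))]
      by_cases hcase : s = Finset.univ ∧ β = 0
      · obtain ⟨rfl, rfl⟩ := hcase
        rw [Finset.sum_eq_single_of_mem i0 (Finset.mem_univ i0)
          (fun b _ hb => by
            rw [hval _ _ _ (Finset.mem_univ b), if_neg (by tauto)]
            simp)]
        rw [hval _ _ _ (Finset.mem_univ i0), if_pos (by exact ⟨rfl, rfl, rfl⟩)]
        have hfilt : (Finset.univ.filter (fun k : Fin m => k < i0)) = ∅ := by
          apply Finset.filter_false_of_mem
          intro k _
          simp only [Fin.lt_def]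
          exact Nat.not_lt_zero _
        have hξu : ξ Finset.univ (0 : Fin m →₀ ℕ) = x := by
          rw [hξ]; exact if_pos ⟨rfl, rfl⟩
        rw [hfilt, hξu, hcardu]
        simp only [Finset.card_empty, pow_zero, one_smul, Finsupp.coe_zero, Pi.zero_apply,
          zero_add, one_smul]
        rw [← add_smul]
        have hpow : ((-1 : K) ^ (m - 1) + (-1 : K) ^ m) = 0 := by
          obtain ⟨k, hk⟩ : ∃ k, m = k + 1 := ⟨m - 1, by omega⟩
          rw [hk]
          simp [pow_succ]
        rw [hpow, zero_smul]
      · have hd : dV (ξ s β) = 0 := by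
          rw [hξ]
          simp only
          rw [if_neg hcase]
          split_ifs with h
          · rw [map_smul, hdd, smul_zero]
          · exact map_zero dV
        rw [hd, smul_zero, add_zero]
        apply Finset.sum_eq_zero
        intro j hj
        rw [hval s j β hj, if_neg (by tauto)]
        simp
    -- ξ is polynomial
    have hpoly : SeriesPoly ξ := by
      intro s
      apply Set.Finite.subset ((Set.finite_singleton β₀).insert (0 : Fin m →₀ ℕ))
      intro β hβ
      simp only [Set.mem_setOf_eq] at hβ
      by_contra h
      simp only [Set.mem_insert_iff, Set.mem_singleton_iff] at h
      push_neg at h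
      apply hβ
      rw [hξ]
      simp only
      rw [if_neg (by tauto), if_neg (by tauto)]
    -- ξ is homogeneous of degree 0
    have hdeg0 : SeriesDeg K deg 0 ξ := by
      intro s β
      rw [hξ]
      simp only
      split_ifs with h1 h2
      · obtain ⟨rfl, rfl⟩ := h1
        have : (0 : ℤ) - ((Finset.univ : Finset (Fin m)).card : ℤ) = i := by
          rw [hcardu]; omega
        rw [this]; exact hx
      · obtain ⟨rfl, rfl⟩ := h2
        have : (0 : ℤ) - ((s₀.card : ℕ) : ℤ) = i + 1 := by
          rw [hcards₀]; omega
        rw [this]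
        exact Submodule.smul_mem _ _ (hdeg i x hx)
      · exact zero_mem _
    obtain ⟨x', -, -, hxeq⟩ := hdisc m ξ hpoly hdeg0 hcocycle
    have := congrFun (congrFun hxeq (Finset.univ : Finset (Fin m))) (0 : Fin m →₀ ℕ)
    rw [show ξ Finset.univ (0 : Fin m →₀ ℕ) = x from by
      rw [hξ]; exact if_pos ⟨rfl, rfl⟩] at this
    have huniv : (Finset.univ : Finset (Fin m)) ≠ ∅ := by
      have : i0 ∈ (Finset.univ : Finset (Fin m)) := Finset.mem_univ i0
      intro h; rw [h] at this; exact absurd this (Finset.notMem_empty i0)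
    rw [show unitSeries m x' Finset.univ (0 : Fin m →₀ ℕ) = 0 from
      if_neg (by tauto)] at this
    exact hxne this
  · -- concentration in non-negative degrees implies discreteness
    intro hneg n ξ hpoly hdeg0 hD
    have hzero : ∀ s : Finset (Fin n), s ≠ ∅ → ∀ β, ξ s β = 0 := by
      intro s hs β
      have h := hdeg0 s β
      have hc : 0 < s.card := Finset.card_pos.mpr (Finset.nonempty_iff_ne_empty.mpr hs)
      rw [hneg _ (by omega), Submodule.mem_bot] at h
      exact h
    have hDval : ∀ s β, seriesD K dV ξ s β = 0 := fun s β =>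
      congrFun (congrFun hD s) β
    have hd0 : ∀ β, dV (ξ ∅ β) = 0 := by
      intro β
      have h := hDval ∅ β
      simpa [seriesD] using h
    have hne : ∀ (j : Fin n) (β : Fin n →₀ ℕ), ξ ∅ (β + Finsupp.single j 1) = 0 := by
      intro j β
      have h := hDval {j} β
      unfold seriesD at h
      rw [Finset.sum_attach ({j} : Finset (Fin n))
        (fun k => ((-1 : K) ^ ((({j} : Finset (Fin n)).filter (fun l => l < k)).card)) •
          ((β k + 1) • ξ (({j} : Finset (Fin n)).erase k) (β + Finsupp.single k 1)))] at h
      rw [Finset.sum_singleton] at h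
      rw [hzero {j} (by simp) β, map_zero, smul_zero, add_zero,
        Finset.erase_singleton] at h
      rw [Finset.filter_singleton] at h
      rw [if_neg (lt_irrefl j)] at h
      simp only [Finset.card_empty, pow_zero, one_smul] at h
      rw [← Nat.cast_smul_eq_nsmul K] at h
      rcases smul_eq_zero.mp h with h' | h'
      · exact absurd h' (by exact_mod_cast Nat.succ_ne_zero (β j))
      · exact h'
    have hne0 : ∀ γ : Fin n →₀ ℕ, γ ≠ 0 → ξ ∅ γ = 0 := by
      intro γ hγ
      obtain ⟨j, hj⟩ : ∃ j, γ j ≠ 0 := by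
        by_contra h
        push_neg at h
        exact hγ (Finsupp.ext h)
      have hle : Finsupp.single j 1 ≤ γ :=
        Finsupp.single_le_iff.mpr (Nat.one_le_iff_ne_zero.mpr hj)
      have := hne j (γ - Finsupp.single j 1)
      rwa [tsub_add_cancel_of_le hle] at this
    refine ⟨ξ ∅ 0, by simpa using hdeg0 ∅ 0, hd0 0, ?_⟩
    funext s β
    show ξ s β = (if s = ∅ ∧ β = 0 then ξ ∅ 0 else 0)
    by_cases hs : s = ∅
    · subst hs
      by_cases hβ : β = 0
      · subst hβ; rw [if_pos ⟨rfl, rfl⟩]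
      · rw [if_neg (by tauto)]; exact hne0 β hβ
    · rw [if_neg (by tauto)]; exact hzero s hs β
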